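/- For every q ≥ 0, the partial stationary sum M(q,0) = ∑_{(ỹ',q')∈𝕏, q' ≤ q} (C − f(ỹ',q'))·π_Ψ(ỹ',q') has the closed form M(q,0) = c_{M0}·ρ^{q+1}, where c_{M0} = (λ̄/μ̄)·(μ·log(μ/λ) + μ̄·log(μ̄/λ̄) − C). -/

import Mathlib

open scoped BigOperators

noncomputable section

/-- The state space `𝕏 = {(0,q) : q ∈ ℕ} ∪ {(1,q) : q ≥ 1}` of the joint chain,
with the departure indicator encoded as a `Bool`. -/
abbrev XS : Type := {p : Bool × ℕ // p.1 = true → 1 ≤ p.2}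

/-- `ρ = λμ̄/(λ̄μ)`. -/
def rho (lam mu : ℝ) : ℝ := lam * (1 - mu) / ((1 - lam) * mu)

/-- The invariant distribution `π_Q` of the queue-length chain. -/
def piQ (lam mu : ℝ) (q : ℕ) : ℝ :=
  if q = 0 then ((1 - lam) * mu - lam * (1 - mu)) / mu
  else ((1 - lam) * mu - lam * (1 - mu)) / (mu * (1 - mu)) * rho lam mu ^ q

/-- The queue kernel `K` on ℕ. -/
def kerQ (lam mu : ℝ) (q q' : ℕ) : ℝ :=
  if q = 0 then (if q' = 1 then lam else if q' = 0 then 1 - lam else 0)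
  else if q' + 1 = q then (1 - lam) * mu
  else if q' = q + 1 then lam * (1 - mu)
  else if q' = q then 1 - lam * (1 - mu) - (1 - lam) * mu
  else 0

/-- The invariant distribution `π_Ψ` of the joint chain `(ỹ, q)`. -/
def piPsi (lam mu : ℝ) : Bool × ℕ → ℝ
  | (false, 0) => piQ lam mu 0
  | (false, q + 1) => (1 - mu) * piQ lam mu (q + 1)
  | (true, 0) => 0
  | (true, q + 1) => mu * piQ lam mu (q + 1)

/-- The transition kernel `P` of the joint chain: from `(ỹ,q)`, with arrival
`x̃ = q' - q + ỹ ∈ {0,1}` (probability `λ` resp. `λ̄`), the next state is `(ỹ',q')`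
with departure probability `1,0` at `q' = 0` and `μ̄, μ` at `q' ≥ 1`. -/
def kerP (lam mu : ℝ) (ψ ψ' : Bool × ℕ) : ℝ :=
  (if ((ψ'.2 : ℤ) - (ψ.2 : ℤ) + (if ψ.1 then 1 else 0)) = 1 then lam
   else if ((ψ'.2 : ℤ) - (ψ.2 : ℤ) + (if ψ.1 then 1 else 0)) = 0 then 1 - lam
   else 0) *
  (if ψ'.2 = 0 then (if ψ'.1 then 0 else 1) else (if ψ'.1 then mu else 1 - mu))

/-- The `i`-step kernel `P^i` of the joint chain. -/
def kerIter (lam mu : ℝ) : ℕ → Bool × ℕ → Bool × ℕ → ℝ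
  | 0, ψ, ψ' => if ψ = ψ' then 1 else 0
  | i + 1, ψ, ψ' => ∑' ψ'' : XS, kerIter lam mu i ψ ψ''.val * kerP lam mu ψ''.val ψ'

/-- The information-density function `f` on the joint state space. -/
def fInfo (lam mu : ℝ) : Bool × ℕ → ℝ
  | (false, 0) => Real.log (1 / (1 - lam))
  | (false, _ + 1) => Real.log ((1 - mu) / (1 - lam))
  | (true, 0) => 0
  | (true, _ + 1) => Real.log (mu / lam)

/-- The binary entropy function. -/
def Hbin (p : ℝ) : ℝ := -(p * Real.log p) - (1 - p) * Real.log (1 - p)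

/-- The capacity `C = H(λ) - (λ/μ) H(μ)` of the timing channel. -/
def Cap (lam mu : ℝ) : ℝ := Hbin lam - lam / mu * Hbin mu

/-- The constant `c_{M0}`. -/
def cM0 (lam mu : ℝ) : ℝ :=
  (1 - lam) / (1 - mu) *
    (mu * Real.log (mu / lam) + (1 - mu) * Real.log ((1 - mu) / (1 - lam)) - Cap lam mu)

/-- The constant `c_{M̃}`. -/
def cMt (lam mu : ℝ) : ℝ :=
  cM0 lam mu / mu + (Cap lam mu - Real.log (mu / lam)) * piQ lam mu 0 / (1 - mu)

/-- The partial stationary sum `M(q,0) = ∑_{ψ' ∈ 𝕏, q' ≤ q} (C - f(ψ')) π_Ψ(ψ')`. -/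
def M0 (lam mu : ℝ) (q : ℕ) : ℝ :=
  ∑' ψ : {p : Bool × ℕ // (p.1 = true → 1 ≤ p.2) ∧ p.2 ≤ q},
    (Cap lam mu - fInfo lam mu ψ.val) * piPsi lam mu ψ.val

/-- The partial stationary sum
`M(q,1) = ∑_{ψ' ∈ 𝕏 : q' < q, or q' = q and ỹ' = 1} (C - f(ψ')) π_Ψ(ψ')`. -/
def M1 (lam mu : ℝ) (q : ℕ) : ℝ :=
  ∑' ψ : {p : Bool × ℕ // (p.1 = true → 1 ≤ p.2) ∧ (p.2 < q ∨ (p.2 = q ∧ p.1 = true))},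
    (Cap lam mu - fInfo lam mu ψ.val) * piPsi lam mu ψ.val

/-- `r(ψ,i) = ∑_{ψ' ∈ 𝕏} (f(ψ') - C) π_Ψ(ψ') P^i(ψ',ψ)`. -/
def rfun (lam mu : ℝ) (i : ℕ) (ψ : Bool × ℕ) : ℝ :=
  ∑' ψ' : XS, (fInfo lam mu ψ'.val - Cap lam mu) * piPsi lam mu ψ'.val *
    kerIter lam mu i ψ'.val ψ

/-- `R(ψ) = ∑_{i=0}^∞ r(ψ,i)`. -/
def Rfun (lam mu : ℝ) (ψ : Bool × ℕ) : ℝ := ∑' i : ℕ, rfun lam mu i ψ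

/-- The stationary autocovariance
`Cov_i = ∑_{ψ,ψ' ∈ 𝕏} π_Ψ(ψ)(f(ψ)-C)(f(ψ')-C) P^i(ψ,ψ')`. -/
def covI (lam mu : ℝ) (i : ℕ) : ℝ :=
  ∑' p : XS × XS,
    piPsi lam mu p.1.val * (fInfo lam mu p.1.val - Cap lam mu) *
      (fInfo lam mu p.2.val - Cap lam mu) * kerIter lam mu i p.1.val p.2.val

/-- The Lyapunov function `V(ỹ,q) = (q - ỹ)/(μ - λ)`. -/
def Vlya (lam mu : ℝ) (ψ : Bool × ℕ) : ℝ :=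
  ((ψ.2 : ℝ) - (if ψ.1 then 1 else 0)) / (mu - lam)

/-- Stationary path probability `ℙ_n` for block length `n = m+1`:
`π_Ψ(ψ_0) ∏_{l=0}^{n-2} P(ψ_l, ψ_{l+1})`. -/
def pathP (lam mu : ℝ) (m : ℕ) (ψ : Fin (m + 1) → XS) : ℝ :=
  piPsi lam mu (ψ 0).val * ∏ l : Fin m, kerP lam mu (ψ l.castSucc).val (ψ l.succ).val

/-- The partial sum `S_n = ∑_{i=0}^{n-1} f(ψ_i)` along a path, for `n = m+1`. -/
def Spath (lam mu : ℝ) (m : ℕ) (ψ : Fin (m + 1) → XS) : ℝ :=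
  ∑ i : Fin (m + 1), fInfo lam mu (ψ i).val

/-- `Var_n = ∑_paths ℙ_n(path) (S_n - nC)^2`, for `n = m+1`. -/
def VarN (lam mu : ℝ) (m : ℕ) : ℝ :=
  ∑' ψ : Fin (m + 1) → XS,
    pathP lam mu m ψ * (Spath lam mu m ψ - ((m : ℝ) + 1) * Cap lam mu) ^ 2

/-- The explicit stationary variance `V₀` of `f`. -/
def V0 (lam mu : ℝ) : ℝ :=
  Real.log (1 / (1 - lam)) ^ 2 * piQ lam mu 0 +
    Real.log (mu / lam) ^ 2 * mu * (1 - piQ lam mu 0) +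
    Real.log ((1 - mu) / (1 - lam)) ^ 2 * (1 - mu) * (1 - piQ lam mu 0) -
    Cap lam mu ^ 2

/-- The explicit sum of autocovariances `Σ = ∑_{i=0}^∞ Cov_i`. -/
def SigSum (lam mu : ℝ) : ℝ :=
  Real.log (1 / (1 - lam)) *
      (-(cMt lam mu) * rho lam mu / (1 - rho lam mu) - cM0 lam mu * rho lam mu) +
    Real.log (mu / lam) * cM0 lam mu * rho lam mu / (1 - rho lam mu) +
    Real.log ((1 - mu) / (1 - lam)) * (rho lam mu / (1 - rho lam mu)) *
      (cMt lam mu - rho lam mu * cM0 lam mu)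

/-- The asymptotic standard deviation `σ = √(-V₀ + 2Σ)`. -/
def sigmaBE (lam mu : ℝ) : ℝ := Real.sqrt (-(V0 lam mu) + 2 * SigSum lam mu)

/-- The standard normal cumulative distribution function `Φ`. -/
def stdNormCDF (x : ℝ) : ℝ :=
  (Real.sqrt (2 * Real.pi))⁻¹ * ∫ t in Set.Iic x, Real.exp (-(t ^ 2) / 2)

/-- Single-step departure probability `w(ỹ|q)` (queues that have gone negative,
which can only happen on a zero-probability trajectory, are treated like `q = 0`). -/
def wdep (mu : ℝ) (y : Bool) (q : ℤ) : ℝ :=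
  if q ≤ 0 then (if y then 0 else 1) else (if y then mu else 1 - mu)

/-- The queue trajectory `q_i = q_{i-1} + x̃_i - ỹ_{i-1}`, with arrivals `x̃_i = x i`
for `i ≥ 1` and departures `ỹ_i = y i`. -/
def qtraj (q0 : ℕ) (x y : ℕ → Bool) : ℕ → ℤ
  | 0 => (q0 : ℤ)
  | i + 1 => qtraj q0 x y i + (if x (i + 1) then 1 else 0) - (if y i then 1 else 0)

/-- The block channel `W(y|x) = ∏_{i=0}^{n-1} w(ỹ_i|q_i)` of the queue channel. -/
def Wchan (mu : ℝ) (n : ℕ) (q0 : ℕ) (x y : ℕ → Bool) : ℝ :=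
  ∏ i ∈ Finset.range n, wdep mu (y i) (qtraj q0 x y i)

/-- The input distribution `P_X(q_0, x̃) = π_Q(q_0) ∏_{i=1}^{n-1} λ^{x̃_i} λ̄^{1-x̃_i}`. -/
def inpP (lam mu : ℝ) (n : ℕ) (q0 : ℕ) (x : ℕ → Bool) : ℝ :=
  piQ lam mu q0 * ∏ i ∈ Finset.range (n - 1), (if x (i + 1) then lam else 1 - lam)

/-- Extend an arrival word `(x̃_1, …, x̃_m) ∈ {0,1}^m` to a function on ℕ. -/
def extX (m : ℕ) (xf : Fin m → Bool) : ℕ → Bool :=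
  fun i => if h : 1 ≤ i ∧ i ≤ m then xf ⟨i - 1, by omega⟩ else false

/-- Extend an output word `(ỹ_0, …, ỹ_{n-1}) ∈ {0,1}^n` to a function on ℕ. -/
def extY (n : ℕ) (yf : Fin n → Bool) : ℕ → Bool :=
  fun i => if h : i < n then yf ⟨i, h⟩ else false

end
/-- for every `q ≥ 0`, the partial stationary sum
`M(q,0) = ∑_{(ỹ',q')∈𝕏, q' ≤ q} (C - f(ỹ',q')) π_Ψ(ỹ',q')` equals `c_{M0} ρ^{q+1}`. -/

noncomputable def gM (lam mu : ℝ) (p : Bool × ℕ) : ℝ :=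
  (Cap lam mu - fInfo lam mu p) * piPsi lam mu p

def sM (q : ℕ) : Finset (Bool × ℕ) :=
  ((Finset.univ : Finset Bool) ×ˢ Finset.range (q + 1)).filter
    (fun p => p.1 = true → 1 ≤ p.2)

lemma sM_mem (q : ℕ) (x : Bool × ℕ) :
    x ∈ sM q ↔ ((x.1 = true → 1 ≤ x.2) ∧ x.2 ≤ q) := by
  simp [sM, Finset.mem_filter, Nat.lt_succ_iff, and_comm]

lemma M0_eq_finsum (lam mu : ℝ) (q : ℕ) :
    M0 lam mu q = ∑ x ∈ sM q, gM lam mu x := by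
  haveI : Fintype {p : Bool × ℕ // (p.1 = true → 1 ≤ p.2) ∧ p.2 ≤ q} :=
    Fintype.subtype (sM q) (sM_mem q)
  rw [M0, tsum_fintype]
  exact (Finset.sum_subtype (sM q) (sM_mem q) (gM lam mu)).symm

lemma sM_succ (q : ℕ) :
    sM (q + 1) = insert (false, q + 1) (insert (true, q + 1) (sM q)) := by
  ext x
  simp only [sM_mem, Finset.mem_insert]
  rcases x with ⟨b, n⟩
  cases b <;> simp <;> omega


theorem M0_closed_form (lam mu : ℝ) (h0 : 0 < lam) (h1 : lam < mu) (h2 : mu < 1) :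
    ∀ q : ℕ, M0 lam mu q = cM0 lam mu * rho lam mu ^ (q + 1) := by
  have hl : lam ≠ 0 := ne_of_gt h0
  have hl1 : (1 : ℝ) - lam ≠ 0 := by nlinarith
  have hm : mu ≠ 0 := by nlinarith
  have hm1 : (1 : ℝ) - mu ≠ 0 := by nlinarith
  have base : gM lam mu (false, 0) = cM0 lam mu * rho lam mu := by
    simp only [gM, fInfo, piPsi, piQ, if_pos rfl, if_true, cM0, rho, Cap, Hbin, one_div,
      Real.log_inv, Real.log_div hm hl, Real.log_div hm1 hl1]
    field_simp
    ring
  have step : ∀ q : ℕ,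
      gM lam mu (false, q + 1) + gM lam mu (true, q + 1) =
        cM0 lam mu * rho lam mu ^ (q + 2) - cM0 lam mu * rho lam mu ^ (q + 1) := by
    intro q
    simp only [gM, fInfo, piPsi, piQ, if_neg (Nat.succ_ne_zero q), cM0, rho, Cap]
    have hrr : ((1 : ℝ) - lam) * mu ≠ 0 := mul_ne_zero hl1 hm
    rw [pow_succ (lam * (1 - mu) / ((1 - lam) * mu)) (q + 1)]
    field_simp
    ring
  intro q
  induction q with
  | zero =>
    rw [M0_eq_finsum]
    have : sM 0 = {(false, 0)} := by decide
    rw [this, Finset.sum_singleton, base, pow_one]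
  | succ q ih =>
    rw [M0_eq_finsum, sM_succ]
    have h1' : (false, q + 1) ∉ insert (true, q + 1) (sM q) := by
      simp [sM_mem]
    have h2' : (true, q + 1) ∉ sM q := by
      simp [sM_mem]
    rw [Finset.sum_insert h1', Finset.sum_insert h2', ← M0_eq_finsum lam mu q, ih]
    have := step q
    linarith
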